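/- Let (H_n)_{n∈ℕ} be a sequence of nonnegative reals and s > 0. If there exist C_lin > 0 and 0 < q_lin < 1 with H_n ≤ C_lin·q_lin^{n−m}·H_m for all m ≤ n, and (T_n)_{n∈ℕ} is a nondecreasing sequence of positive reals, then sup_n (∑_{m=0}^{n} T_m)^s · H_n ≤ C_lin·(1 − q_lin^{1/s})^{-s} · sup_n T_n^s · H_n. -/

import Mathlib

/-- Rates with respect to degrees of freedom and cost coincide. -/
theorem rates_eq_complexity
    (H T : ℕ → ℝ) (hH : ∀ n, 0 ≤ H n) (hT : ∀ n, 0 < T n) (hTmono : Monotone T)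
    (s Clin qlin : ℝ) (hs : 0 < s) (hClin : 0 < Clin)
    (hqlin0 : 0 < qlin) (hqlin1 : qlin < 1)
    (hlin : ∀ m n : ℕ, m ≤ n → H n ≤ Clin * qlin ^ (n - m) * H m) :
    (⨆ n : ℕ, ENNReal.ofReal ((∑ m ∈ Finset.range (n + 1), T m) ^ s * H n))
      ≤ ENNReal.ofReal (Clin * (1 - qlin ^ (1 / s)) ^ (-s)) *
        ⨆ n : ℕ, ENNReal.ofReal ((T n) ^ s * H n) := by
  have hr0 : 0 < qlin ^ (1 / s) := Real.rpow_pos_of_pos hqlin0 _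
  have hr1 : qlin ^ (1 / s) < 1 :=
    Real.rpow_lt_one hqlin0.le hqlin1 (by positivity)
  set r : ℝ := qlin ^ (1 / s) with hrdef
  have h1r : 0 < 1 - r := by linarith
  have hC' : 0 ≤ Clin * (1 - r) ^ (-s) := by positivity
  have hpow : ∀ k : ℕ, (qlin ^ k) ^ (1 / s) = r ^ k := by
    intro k
    rw [hrdef, ← Real.rpow_natCast qlin k, ← Real.rpow_mul hqlin0.le, mul_comm,
      Real.rpow_mul hqlin0.le, Real.rpow_natCast]
  refine iSup_le fun n => ?_
  rcases eq_or_lt_of_le (hH n) with h0 | hHn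
  · rw [← h0, mul_zero, ENNReal.ofReal_zero]; exact zero_le
  have hne : (Finset.range (n + 1)).Nonempty := ⟨0, by simp⟩
  set B : ℝ := (Finset.range (n + 1)).sup' hne (fun m => T m ^ s * H m) with hBdef
  have hBle : ∀ m ∈ Finset.range (n + 1), T m ^ s * H m ≤ B :=
    fun m hm => by rw [hBdef]; exact Finset.le_sup' (fun m => T m ^ s * H m) hm
  have hB0 : 0 < B :=
    lt_of_lt_of_le (mul_pos (Real.rpow_pos_of_pos (hT n) s) hHn) (hBle n (Finset.self_mem_range_succ n))
  set A : ℝ := (Clin * B / H n) ^ (1 / s) with hAdef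
  have hA0 : 0 < A := Real.rpow_pos_of_pos (by positivity) _
  have hTm : ∀ m ∈ Finset.range (n + 1), T m ≤ A * r ^ (n - m) := by
    intro m hm
    have hmn : m ≤ n := Nat.lt_succ_iff.mp (Finset.mem_range.mp hm)
    have h1 : T m ^ s * H n ≤ Clin * qlin ^ (n - m) * B := by
      calc T m ^ s * H n ≤ T m ^ s * (Clin * qlin ^ (n - m) * H m) :=
            mul_le_mul_of_nonneg_left (hlin m n hmn) (Real.rpow_nonneg (hT m).le s)
        _ = Clin * qlin ^ (n - m) * (T m ^ s * H m) := by ring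
        _ ≤ Clin * qlin ^ (n - m) * B :=
            mul_le_mul_of_nonneg_left (hBle m hm) (by positivity)
    have h2 : T m ^ s ≤ Clin * B / H n * qlin ^ (n - m) := by
      rw [div_mul_eq_mul_div, le_div_iff₀ hHn]
      exact le_of_le_of_eq h1 (by ring)
    have h3 : (T m ^ s) ^ (1 / s) ≤ (Clin * B / H n * qlin ^ (n - m)) ^ (1 / s) :=
      Real.rpow_le_rpow (Real.rpow_nonneg (hT m).le s) h2 (by positivity)
    rwa [← Real.rpow_mul (hT m).le, mul_one_div, div_self hs.ne', Real.rpow_one,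
      Real.mul_rpow (by positivity) (by positivity), hpow, ← hAdef] at h3
  have hsum : ∑ m ∈ Finset.range (n + 1), T m ≤ A * (1 - r)⁻¹ := by
    calc ∑ m ∈ Finset.range (n + 1), T m
        ≤ ∑ m ∈ Finset.range (n + 1), A * r ^ (n - m) := Finset.sum_le_sum hTm
      _ = A * ∑ m ∈ Finset.range (n + 1), r ^ (n - m) := by rw [← Finset.mul_sum]
      _ ≤ A * (1 - r)⁻¹ := by
          refine mul_le_mul_of_nonneg_left ?_ hA0.le
          have hrefl : ∑ m ∈ Finset.range (n + 1), r ^ (n + 1 - 1 - m)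
              = ∑ m ∈ Finset.range (n + 1), r ^ m :=
            Finset.sum_range_reflect (fun k => r ^ k) (n + 1)
          simp only [Nat.add_sub_cancel] at hrefl
          rw [hrefl]
          exact sum_le_hasSum _ (fun i _ => by positivity)
            (hasSum_geometric_of_lt_one hr0.le hr1)
  have hS0 : 0 ≤ ∑ m ∈ Finset.range (n + 1), T m :=
    Finset.sum_nonneg fun m _ => (hT m).le
  have h4 : (∑ m ∈ Finset.range (n + 1), T m) ^ s ≤ (A * (1 - r)⁻¹) ^ s :=
    Real.rpow_le_rpow hS0 hsum hs.le
  have h5 : (A * (1 - r)⁻¹) ^ s = Clin * B / H n * (1 - r) ^ (-s) := by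
    rw [Real.mul_rpow hA0.le (inv_nonneg.mpr h1r.le), hAdef,
      ← Real.rpow_mul (by positivity), one_div_mul_cancel hs.ne', Real.rpow_one,
      Real.inv_rpow h1r.le, ← Real.rpow_neg h1r.le]
  have hfin : (∑ m ∈ Finset.range (n + 1), T m) ^ s * H n
      ≤ Clin * (1 - r) ^ (-s) * B := by
    calc (∑ m ∈ Finset.range (n + 1), T m) ^ s * H n
        ≤ Clin * B / H n * (1 - r) ^ (-s) * H n := by
          rw [← h5]; exact mul_le_mul_of_nonneg_right h4 hHn.le
      _ = Clin * (1 - r) ^ (-s) * B := by field_simp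
  obtain ⟨m₀, hm₀, hBeq⟩ := Finset.exists_mem_eq_sup' hne (fun m => T m ^ s * H m)
  calc ENNReal.ofReal ((∑ m ∈ Finset.range (n + 1), T m) ^ s * H n)
      ≤ ENNReal.ofReal (Clin * (1 - r) ^ (-s) * (T m₀ ^ s * H m₀)) := by
        refine ENNReal.ofReal_le_ofReal ?_
        rw [← hBeq, ← hBdef]; exact hfin
    _ = ENNReal.ofReal (Clin * (1 - r) ^ (-s)) * ENNReal.ofReal (T m₀ ^ s * H m₀) :=
        ENNReal.ofReal_mul hC'
    _ ≤ ENNReal.ofReal (Clin * (1 - r) ^ (-s)) *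
        ⨆ k, ENNReal.ofReal (T k ^ s * H k) :=
        mul_le_mul_right (le_iSup (fun k => ENNReal.ofReal (T k ^ s * H k)) m₀) _
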